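/- Let I be an ideal of ℝ[x] = MvPolynomial (Fin n) ℝ, let p ∈ ℝ[x], let z : Fin d → ℝ[x], and let M₁, M₂ be symmetric real d×d matrices such that M₁ is a Gram matrix for the constant polynomial 1 with respect to z mod I and M₂ is a Gram matrix for p with respect to z mod I. If γ ∈ ℝ is such that the matrix M₂ − γ·M₁ is positive semidefinite, then for every point x ∈ V_ℝ(I) one has eval x p ≥ γ. (Validity of a spectral relaxation: every γ feasible for the generalized-eigenvalue SDP is a lower bound for p on the variety.) -/

import Mathlib

open MvPolynomial Matrix

/-- Validity of a spectral relaxation: if `M₁` is a Gram matrix for `1` and `M₂` a Gram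
matrix for `p` with respect to `z` mod `I`, and `M₂ - γ • M₁` is positive semidefinite,
then `γ` is a lower bound for `p` on the real variety of `I`. -/
theorem spectral_relaxation_valid {n d : ℕ}
    (I : Ideal (MvPolynomial (Fin n) ℝ)) (p : MvPolynomial (Fin n) ℝ)
    (z : Fin d → MvPolynomial (Fin n) ℝ)
    (M₁ M₂ : Matrix (Fin d) (Fin d) ℝ)
    (hM₁sym : M₁ᵀ = M₁) (hM₂sym : M₂ᵀ = M₂)
    (hM₁ : (1 : MvPolynomial (Fin n) ℝ) - ∑ i, ∑ j, M₁ i j • (z i * z j) ∈ I)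
    (hM₂ : p - ∑ i, ∑ j, M₂ i j • (z i * z j) ∈ I)
    (γ : ℝ) (hγ : (M₂ - γ • M₁).PosSemidef) :
    ∀ x : Fin n → ℝ, (∀ g ∈ I, eval x g = 0) → γ ≤ eval x p := by
  intro x hx
  set v : Fin d → ℝ := fun i => eval x (z i) with hv
  have h1 := hx _ hM₁
  have h2 := hx _ hM₂
  simp only [map_sub, map_sum, smul_eq_C_mul, _root_.map_mul, eval_C, _root_.map_one,
    sub_eq_zero] at h1 h2
  have hpsd := hγ.dotProduct_mulVec_nonneg v
  rw [star_trivial] at hpsd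
  have hdot : v ⬝ᵥ (M₂ - γ • M₁).mulVec v
      = ∑ i, ∑ j, (M₂ i j - γ * M₁ i j) * (v i * v j) := by
    simp only [dotProduct, mulVec, dotProduct, Matrix.sub_apply, Matrix.smul_apply,
      smul_eq_mul, Finset.mul_sum, Finset.sum_mul]
    apply Finset.sum_congr rfl; intro i _
    apply Finset.sum_congr rfl; intro j _
    ring
  rw [hdot] at hpsd
  have hsplit : ∑ i, ∑ j, (M₂ i j - γ * M₁ i j) * (v i * v j)
      = (∑ i, ∑ j, M₂ i j * (v i * v j)) - γ * ∑ i, ∑ j, M₁ i j * (v i * v j) := by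
    rw [Finset.mul_sum, ← Finset.sum_sub_distrib]
    apply Finset.sum_congr rfl; intro i _
    rw [Finset.mul_sum, ← Finset.sum_sub_distrib]
    apply Finset.sum_congr rfl; intro j _
    ring
  rw [hsplit, ← h1, ← h2] at hpsd
  linarith
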